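/- For 0 < q < 1 and a positive integer a: −2 log(q) ∑_{n=1}^{a−1} q^n/(1 − q^{2n}) + 2 log(q) ∑_{n=1}^∞ q^n/(1 − q^{2n}) equals 2 q^a log(q)/(1 − q^{2a}) + 2 log(q) ∑_{n=1}^∞ q^n · #{d : d ∣ n, d > a, n/d odd} — i.e. the telescoped form of the derivative of the modular angle: θ'(a+1) − θ'(a) = −2 q^a log(q)/(1 − q^{2a}) where θ'(a) := 2q^a log(q)/(1−q^{2a}) + 2 log(q) ∑_{n≥1} q^n #{d ∣ n : d > a, n/d odd}. -/
import Mathlib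

open Finset

private lemma sum_aux (q : ℝ) (hq : 0 < q) (hq1 : q < 1) (b : ℕ) :
    Summable (fun n : ℕ => q ^ (n + 1) *
      (((n + 1).divisors.filter (fun d => b < d ∧ Odd ((n + 1) / d))).card : ℝ)) := by
  have h1 : Summable (fun n : ℕ => ((n : ℝ) + 2) * q ^ (n + 1)) := by
    have h2 : Summable (fun n : ℕ => ((n : ℝ) ^ 1) * q ^ n) :=
      summable_pow_mul_geometric_of_norm_lt_one (R := ℝ) 1 (r := q)
        (by rwa [Real.norm_eq_abs, abs_of_pos hq])
    have h3 : Summable (fun n : ℕ => q ^ n) := summable_geometric_of_lt_one hq.le hq1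
    have h4 := (h2.add (h3.mul_left 2)).mul_left q
    apply h4.congr
    intro n
    ring
  apply Summable.of_nonneg_of_le (fun n => by positivity) _ h1
  intro n
  have hcard : (((n + 1).divisors.filter (fun d => b < d ∧ Odd ((n + 1) / d))).card : ℝ)
      ≤ (n : ℝ) + 2 := by
    have h1 : ((n + 1).divisors.filter (fun d => b < d ∧ Odd ((n + 1) / d))).card
        ≤ (Finset.range (n + 2)).card := by
      apply Finset.card_le_card
      intro d hd
      simp only [Finset.mem_filter, Nat.mem_divisors] at hd
      have := Nat.le_of_dvd (Nat.succ_pos n) hd.1.1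
      simp only [Finset.mem_range]; omega
    simp only [Finset.card_range] at h1
    exact_mod_cast le_trans (Nat.cast_le.mpr h1) (by push_cast; linarith)
  have hqn : (0:ℝ) ≤ q ^ (n + 1) := by positivity
  calc q ^ (n + 1) * _ ≤ q ^ (n + 1) * ((n : ℝ) + 2) := by
        exact mul_le_mul_of_nonneg_left hcard hqn
    _ = ((n : ℝ) + 2) * q ^ (n + 1) := by ring

private lemma filter_diff (a m : ℕ) (hm : 0 < m) :
    (m.divisors.filter (fun d => a < d ∧ Odd (m / d))).card
      = (m.divisors.filter (fun d => a + 1 < d ∧ Odd (m / d))).card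
        + (if (a + 1) ∣ m ∧ Odd (m / (a + 1)) then 1 else 0) := by
  have hsub : m.divisors.filter (fun d => a + 1 < d ∧ Odd (m / d))
      ⊆ m.divisors.filter (fun d => a < d ∧ Odd (m / d)) := by
    intro d hd
    simp only [Finset.mem_filter] at hd ⊢
    exact ⟨hd.1, by omega, hd.2.2⟩
  have hdiff : m.divisors.filter (fun d => a < d ∧ Odd (m / d))
      \ m.divisors.filter (fun d => a + 1 < d ∧ Odd (m / d))
      = (if (a + 1) ∣ m ∧ Odd (m / (a + 1)) then ({a+1} : Finset ℕ) else ∅) := by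
    ext d
    simp only [Finset.mem_sdiff, Finset.mem_filter, Nat.mem_divisors]
    constructor
    · rintro ⟨⟨⟨hdvd, hm0⟩, hlt, hodd⟩, hnot⟩
      have hd1 : d = a + 1 := by
        by_contra h
        exact hnot ⟨⟨hdvd, hm0⟩, by omega, hodd⟩
      subst hd1
      rw [if_pos ⟨hdvd, hodd⟩]
      simp
    · intro hd
      by_cases h : (a + 1) ∣ m ∧ Odd (m / (a + 1))
      · rw [if_pos h] at hd
        simp only [Finset.mem_singleton] at hd
        subst hd
        refine ⟨⟨⟨h.1, hm.ne'⟩, by omega, h.2⟩, ?_⟩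
        rintro ⟨_, hlt, _⟩; omega
      · rw [if_neg h] at hd; simp at hd
  have := Finset.card_sdiff_of_subset hsub
  rw [hdiff] at this
  by_cases h : (a + 1) ∣ m ∧ Odd (m / (a + 1))
  · rw [if_pos h] at this ⊢
    simp only [Finset.card_singleton] at this
    have hle := Finset.card_le_card hsub
    omega
  · rw [if_neg h] at this ⊢
    simp only [Finset.card_empty] at this
    have hle := Finset.card_le_card hsub
    omega

private lemma tsum_ind (q : ℝ) (hq : 0 < q) (hq1 : q < 1) (a : ℕ) :
    (∑' n : ℕ, (if (a + 1) ∣ (n + 1) ∧ Odd ((n + 1) / (a + 1)) then q ^ (n + 1) else 0))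
      = q ^ (a + 1) / (1 - q ^ (2 * (a + 1))) := by
  have key : (∑' n : ℕ, (if (a + 1) ∣ (n + 1) ∧ Odd ((n + 1) / (a + 1)) then q ^ (n + 1) else 0))
      = ∑' k : ℕ, q ^ ((a + 1) * (2 * k + 1)) := by
    apply tsum_eq_tsum_of_ne_zero_bij (fun k => (a + 1) * (2 * (k : ℕ) + 1) - 1)
    · intro k1 k2 h
      have h1 : (a + 1) * (2 * (k1 : ℕ) + 1) - 1 = (a + 1) * (2 * (k2 : ℕ) + 1) - 1 := h
      have hpos : ∀ k : ℕ, 1 ≤ (a + 1) * (2 * k + 1) :=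
        fun k => Nat.one_le_iff_ne_zero.mpr (by positivity)
      have h2 : (a + 1) * (2 * (k1 : ℕ) + 1) = (a + 1) * (2 * (k2 : ℕ) + 1) := by
        have := hpos k1; have := hpos k2; omega
      have h3 := Nat.eq_of_mul_eq_mul_left (Nat.succ_pos a) h2
      exact Subtype.ext (by omega)
    · intro n hn
      simp only [Function.mem_support, ne_eq, ite_eq_right_iff, not_forall] at hn
      obtain ⟨⟨hdvd, hodd⟩, -⟩ := hn
      obtain ⟨k, hk⟩ := hodd
      refine ⟨⟨k, ?_⟩, ?_⟩
      · simp only [Function.mem_support]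
        positivity
      · simp only
        obtain ⟨c, hc⟩ := hdvd
        have hcval : c = 2 * k + 1 := by
          rw [hc, Nat.mul_div_cancel_left _ (Nat.succ_pos a)] at hk
          omega
        subst hcval
        rw [← hc]
        omega
    · intro k
      have h1 : (a + 1) * (2 * (k : ℕ) + 1) - 1 + 1 = (a + 1) * (2 * (k : ℕ) + 1) := by
        have : 1 ≤ (a + 1) * (2 * (k : ℕ) + 1) := Nat.one_le_iff_ne_zero.mpr (by positivity)
        omega
      simp only [h1]
      rw [if_pos]
      constructor
      · exact ⟨2 * (k : ℕ) + 1, rfl⟩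
      · rw [Nat.mul_div_cancel_left _ (Nat.succ_pos a)]
        exact ⟨k, by omega⟩
  rw [key]
  have h2 : ∀ k : ℕ, q ^ ((a + 1) * (2 * k + 1)) = q ^ (a + 1) * (q ^ (2 * (a + 1))) ^ k := by
    intro k
    rw [← pow_mul, ← pow_add]
    ring_nf
  simp_rw [h2]
  rw [tsum_mul_left, tsum_geometric_of_lt_one (by positivity)
    (by apply pow_lt_one₀ hq.le hq1; omega)]
  ring

theorem stmt5 (q : ℝ) (hq : 0 < q) (hq1 : q < 1) (a : ℕ) (ha : 1 ≤ a) :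
    (2 * q ^ (a + 1) * Real.log q / (1 - q ^ (2 * (a + 1)))
        + 2 * Real.log q * ∑' n : ℕ, q ^ (n + 1) *
            (((n + 1).divisors.filter (fun d => a + 1 < d ∧ Odd ((n + 1) / d))).card : ℝ))
      - (2 * q ^ a * Real.log q / (1 - q ^ (2 * a))
        + 2 * Real.log q * ∑' n : ℕ, q ^ (n + 1) *
            (((n + 1).divisors.filter (fun d => a < d ∧ Odd ((n + 1) / d))).card : ℝ))
      = -2 * q ^ a * Real.log q / (1 - q ^ (2 * a)) := by
  have hS1 := sum_aux q hq hq1 a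
  have hS2 := sum_aux q hq hq1 (a + 1)
  have hdiff : (∑' n : ℕ, q ^ (n + 1) *
            (((n + 1).divisors.filter (fun d => a < d ∧ Odd ((n + 1) / d))).card : ℝ))
      - (∑' n : ℕ, q ^ (n + 1) *
            (((n + 1).divisors.filter (fun d => a + 1 < d ∧ Odd ((n + 1) / d))).card : ℝ))
      = q ^ (a + 1) / (1 - q ^ (2 * (a + 1))) := by
    rw [← Summable.tsum_sub hS1 hS2, ← tsum_ind q hq hq1 a]
    congr 1
    ext n
    have := filter_diff a (n + 1) (Nat.succ_pos n)
    rw [this]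
    by_cases h : (a + 1) ∣ (n + 1) ∧ Odd ((n + 1) / (a + 1))
    · rw [if_pos h]
      push_cast [if_pos h]
      ring
    · rw [if_neg h]
      push_cast [if_neg h]
      ring
  have hne2 : (1:ℝ) - q ^ (2 * (a + 1)) ≠ 0 := by
    have : q ^ (2 * (a + 1)) < 1 := pow_lt_one₀ hq.le hq1 (by omega)
    linarith
  have hne1 : (1:ℝ) - q ^ (2 * a) ≠ 0 := by
    have : q ^ (2 * a) < 1 := pow_lt_one₀ hq.le hq1 (by omega)
    linarith
  set S1 := (∑' n : ℕ, q ^ (n + 1) *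
            (((n + 1).divisors.filter (fun d => a < d ∧ Odd ((n + 1) / d))).card : ℝ))
  set S2 := (∑' n : ℕ, q ^ (n + 1) *
            (((n + 1).divisors.filter (fun d => a + 1 < d ∧ Odd ((n + 1) / d))).card : ℝ))
  have hS2eq : S2 = S1 - q ^ (a + 1) / (1 - q ^ (2 * (a + 1))) := by linarith
  rw [hS2eq]
  field_simp
  ring
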